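/- arXiv:1311.5691 — 2 statements merged into one kernel-verified Lean document; each statement's English description precedes it below -/
import Mathlib

section
/- Let G be a tree (a connected simple graph on n ≥ 2 vertices with n−1 edges). Then the inverse degree ρ(G) = Σ_{v} 1/deg(v) (the sum over all vertices of the reciprocal of the degree) satisfies (n+2)/2 ≤ ρ(G) ≤ (n−1) + 1/(n−1). Moreover, the lower bound is attained if and only if G is isomorphic to the path P_n on n vertices, and the upper bound is attained if and only if G is isomorphic to the star S_n on n vertices (the complete bipartite graph K_{1,n−1}). -/
/-- The inverse degree of a graph on `Fin n`: the sum over all vertices of the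
reciprocal of the degree. -/
noncomputable def inverseDegree {n : ℕ} (G : SimpleGraph (Fin n)) : ℝ :=
  ∑ v : Fin n, (1 : ℝ) / ((G.neighborSet v).ncard : ℝ)

section AuxiliaryLemmas

open SimpleGraph Finset

section Helpers

variable {V : Type*}

/-- A set closed under adjacency in a preconnected graph containing a point is everything. -/
lemma closed_eq_univ {G : SimpleGraph V} (h : G.Preconnected) {S : Set V}
    (hcl : ∀ a b, a ∈ S → G.Adj a b → b ∈ S) {v : V} (hv : v ∈ S) (w : V) : w ∈ S := by
  have key : ∀ ⦃a b : V⦄, G.Walk a b → a ∈ S → b ∈ S := by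
    intro a b p
    induction p with
    | nil => exact id
    | cons h' _ ih => exact fun ha => ih (hcl _ _ ha h')
  obtain ⟨p⟩ := h v w
  exact key p hv

lemma exists_adj_of_preconnected [Fintype V] {G : SimpleGraph V} (h : G.Preconnected)
    (hc : 2 ≤ Fintype.card V) (v : V) : ∃ w, G.Adj v w := by
  obtain ⟨w, hw⟩ := Fintype.exists_ne_of_one_lt_card (by omega) v
  obtain ⟨p⟩ := h v w
  cases p with
  | nil => exact absurd rfl hw.symm  -- can't happen since v ≠ w... careful
  | cons h' _ => exact ⟨_, h'⟩

end Helpers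

section Helpers2

variable {V : Type*} [Fintype V] [DecidableEq V] {G : SimpleGraph V} [DecidableRel G.Adj]

lemma neighbors_of_deg_one {v a : V} (h : G.degree v = 1) (ha : G.Adj v a) :
    ∀ w, G.Adj v w → w = a := by
  intro w hw
  have h1 : ({a} : Finset V) ⊆ G.neighborFinset v := by
    simp [SimpleGraph.mem_neighborFinset, ha]
  have := Finset.eq_of_subset_of_card_le h1 (by simp [h])
  have hw' : w ∈ G.neighborFinset v := by simpa [SimpleGraph.mem_neighborFinset] using hw
  rw [← this] at hw'
  simpa using hw'

lemma neighbors_of_deg_le_two {v a b : V} (h : G.degree v ≤ 2) (ha : G.Adj v a)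
    (hb : G.Adj v b) (hab : a ≠ b) : ∀ w, G.Adj v w → w = a ∨ w = b := by
  intro w hw
  have h1 : ({a, b} : Finset V) ⊆ G.neighborFinset v := by
    intro x hx
    simp only [Finset.mem_insert, Finset.mem_singleton] at hx
    rcases hx with rfl | rfl <;> simp [SimpleGraph.mem_neighborFinset, ha, hb]
  have hcard : ({a, b} : Finset V).card = 2 := Finset.card_pair hab
  have := Finset.eq_of_subset_of_card_le h1 (by rw [hcard]; exact h)
  have hw' : w ∈ G.neighborFinset v := by simpa [SimpleGraph.mem_neighborFinset] using hw
  rw [← this] at hw'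
  simpa using hw'

end Helpers2

section Trail

open scoped Classical in
noncomputable def nextV {n : ℕ} (G : SimpleGraph (Fin n)) (p c : Fin n) : Fin n :=
  if h : ∃ w, G.Adj c w ∧ w ≠ p then h.choose else c

lemma nextV_spec {n : ℕ} {G : SimpleGraph (Fin n)} {p c : Fin n}
    (h : ∃ w, G.Adj c w ∧ w ≠ p) : G.Adj c (nextV G p c) ∧ nextV G p c ≠ p := by
  rw [nextV]
  rw [dif_pos h]
  exact h.choose_spec

noncomputable def trailF {n : ℕ} (G : SimpleGraph (Fin n)) (v₀ v₁ : Fin n) : ℕ → Fin n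
  | 0 => v₀
  | 1 => v₁
  | (k+2) => nextV G (trailF G v₀ v₁ k) (trailF G v₀ v₁ (k+1))

end Trail

section PathLemma

open SimpleGraph

variable {n : ℕ}

lemma path_iso_of_degrees (hn : 2 ≤ n) (G : SimpleGraph (Fin n)) (hconn : G.Connected)
    [DecidableRel G.Adj]
    (hdeg : ∀ v, G.degree v = 1 ∨ G.degree v = 2)
    (hsum : ∑ v, G.degree v = 2 * (n - 1))
    (hedges : G.edgeFinset.card = n - 1) :
    Nonempty (G ≃g SimpleGraph.pathGraph n) := by
  classical
  obtain ⟨v₀, h0⟩ : ∃ v, G.degree v = 1 := by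
    by_contra hc
    push_neg at hc
    have h2 : ∀ v, G.degree v = 2 := fun v => (hdeg v).resolve_left (hc v)
    have : ∑ v, G.degree v = 2 * n := by
      rw [Finset.sum_congr rfl fun v _ => h2 v]
      simp [Finset.card_univ, mul_comm]
    omega
  obtain ⟨v₁, h01⟩ : ∃ w, G.Adj v₀ w :=
    exists_adj_of_preconnected hconn.preconnected (by simpa using hn) v₀
  have huniq : ∀ w, G.Adj v₀ w → w = v₁ := neighbors_of_deg_one h0 h01
  set f : ℕ → Fin n := trailF G v₀ v₁ with hf
  have hf0 : f 0 = v₀ := rfl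
  have hf1 : f 1 = v₁ := rfl
  have hfstep : ∀ k, f (k + 2) = nextV G (f k) (f (k + 1)) := fun k => rfl
  have good : ∀ k, k ≤ n - 1 →
      (∀ i j, i ≤ k → j ≤ k → f i = f j → i = j) ∧
      (∀ i, i < k → G.Adj (f i) (f (i + 1))) := by
    intro k
    induction k with
    | zero => exact fun _ => ⟨fun i j hi hj _ => by omega, fun i hi => by omega⟩
    | succ k ih =>
      intro hk1
      obtain ⟨hinj, hadj⟩ := ih (by omega)
      have key : G.Adj (f k) (f (k + 1)) ∧ ∀ j, j ≤ k → f (k + 1) ≠ f j := by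
        rcases Nat.eq_zero_or_pos k with rfl | hkpos
        · refine ⟨h01, fun j hj => ?_⟩
          interval_cases j
          exact (G.ne_of_adj h01).symm
        · have hprev : G.Adj (f k) (f (k - 1)) := by
            have := hadj (k - 1) (by omega)
            rw [show k - 1 + 1 = k by omega] at this
            exact this.symm
          have hex : ∃ w, G.Adj (f k) w ∧ w ≠ f (k - 1) := by
            by_contra hcon
            push_neg at hcon
            have hcl : ∀ a b : Fin n, a ∈ {x | ∃ i ≤ k, f i = x} → G.Adj a b →
                b ∈ {x | ∃ i ≤ k, f i = x} := by
              rintro a b ⟨i, hik, rfl⟩ hab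
              rcases Nat.eq_zero_or_pos i with rfl | hipos
              · exact ⟨1, by omega, (huniq b hab).symm⟩
              rcases Nat.lt_or_ge i k with hik' | hik'
              · have hA : G.Adj (f i) (f (i - 1)) := by
                  have := hadj (i - 1) (by omega)
                  rw [show i - 1 + 1 = i by omega] at this
                  exact this.symm
                have hB : G.Adj (f i) (f (i + 1)) := hadj i hik'
                have hne : f (i - 1) ≠ f (i + 1) := by
                  intro hE
                  have := hinj _ _ (by omega) (by omega) hE
                  omega
                have := neighbors_of_deg_le_two
                  (by rcases hdeg (f i) with h | h <;> omega) hA hB hne b hab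
                rcases this with rfl | rfl
                exacts [⟨i - 1, by omega, rfl⟩, ⟨i + 1, by omega, rfl⟩]
              · have hik'' : i = k := by omega
                subst hik''
                exact ⟨i - 1, by omega, (hcon b hab).symm⟩
            have hall := fun w => closed_eq_univ hconn.preconnected hcl
              (⟨0, by omega, rfl⟩ : v₀ ∈ {x | ∃ i ≤ k, f i = x}) w
            have hsub : (Finset.univ : Finset (Fin n)) ⊆
                (Finset.range (k + 1)).image f := by
              intro w _
              obtain ⟨i, hik, hfi⟩ := hall w
              exact Finset.mem_image.mpr ⟨i, Finset.mem_range.mpr (by omega), hfi⟩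
            have h2 := Finset.card_le_card hsub
            have h1 := Finset.card_image_le (f := f) (s := Finset.range (k + 1))
            simp only [Finset.card_univ, Fintype.card_fin, Finset.card_range] at h2 h1
            omega
          have fresh : ∀ w, G.Adj (f k) w → w ≠ f (k - 1) → ∀ j, j ≤ k → w ≠ f j := by
            intro w hw hwne j hj hEq
            subst hEq
            have hadjj : G.Adj (f j) (f k) := hw.symm
            rcases Nat.eq_or_lt_of_le hj with rfl | hjk
            · exact G.irrefl hw
            have hjk1 : j ≠ k - 1 := fun hE => hwne (by rw [hE])
            have hjk2 : j + 2 ≤ k := by omega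
            rcases Nat.eq_zero_or_pos j with rfl | hjpos
            · have := huniq (f k) hadjj
              rw [← hf1] at this
              have := hinj _ _ (by omega) (by omega) this
              omega
            · have hA : G.Adj (f j) (f (j - 1)) := by
                have := hadj (j - 1) (by omega)
                rw [show j - 1 + 1 = j by omega] at this
                exact this.symm
              have hB : G.Adj (f j) (f (j + 1)) := hadj j (by omega)
              have hne : f (j - 1) ≠ f (j + 1) := by
                intro hE
                have := hinj _ _ (by omega) (by omega) hE
                omega
              have := neighbors_of_deg_le_two
                (by rcases hdeg (f j) with h | h <;> omega) hA hB hne (f k) hadjj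
              rcases this with hE | hE <;>
                · have := hinj _ _ (by omega) (by omega) hE
                  omega
          have hspec := nextV_spec (p := f (k - 1)) (c := f k) hex
          rw [show k + 1 = (k - 1) + 2 by omega, hfstep, show k - 1 + 1 = k by omega]
          exact ⟨hspec.1, fun j hj => fresh _ hspec.1 hspec.2 j hj⟩
      constructor
      · intro i j hi hj hE
        rcases Nat.lt_or_ge i (k + 1) with hi' | hi' <;>
          rcases Nat.lt_or_ge j (k + 1) with hj' | hj'
        · exact hinj i j (by omega) (by omega) hE
        · have : j = k + 1 := by omega
          subst this
          exact absurd hE.symm (key.2 i (by omega))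
        · have : i = k + 1 := by omega
          subst this
          exact absurd hE (key.2 j (by omega))
        · omega
      · intro i hi
        rcases Nat.lt_or_ge i k with hi' | hi'
        · exact hadj i hi'
        · have : i = k := by omega
          subst this
          exact key.1
  obtain ⟨hinj, hadj⟩ := good (n - 1) le_rfl
  have hvlt : ∀ v : Fin n, v.val ≤ n - 1 := fun v => by have := v.isLt; omega
  set g : Fin n → Fin n := fun i => f i.val with hg
  have ginj : Function.Injective g := by
    intro a b hE
    exact Fin.ext (hinj _ _ (hvlt a) (hvlt b) hE)
  have gbij : Function.Bijective g := Finite.injective_iff_bijective.mp ginj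
  -- edges of G are exactly the consecutive pairs
  have hedge_char : ∀ a b : Fin n, G.Adj a b →
      ∃ i, i < n - 1 ∧ s(a, b) = s(f i, f (i + 1)) := by
    have hsubT : (Finset.range (n - 1)).image (fun i => s(f i, f (i + 1))) ⊆
        G.edgeFinset := by
      intro e he
      obtain ⟨i, hi, rfl⟩ := Finset.mem_image.mp he
      rw [Finset.mem_range] at hi
      rw [SimpleGraph.mem_edgeFinset]
      exact hadj i hi
    have hcardT : ((Finset.range (n - 1)).image (fun i => s(f i, f (i + 1)))).card
        = n - 1 := by
      rw [Finset.card_image_of_injOn, Finset.card_range]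
      intro i hi j hj hE
      rw [Finset.mem_coe, Finset.mem_range] at hi hj
      rw [Sym2.eq_iff] at hE
      rcases hE with ⟨h1, h2⟩ | ⟨h1, h2⟩
      · exact hinj _ _ (by omega) (by omega) h1
      · have e1 := hinj _ _ (by omega) (by omega) h1
        have e2 := hinj _ _ (by omega) (by omega) h2
        omega
    have hTeq := Finset.eq_of_subset_of_card_le hsubT (by omega)
    intro a b hab
    have : s(a, b) ∈ G.edgeFinset := by
      rw [SimpleGraph.mem_edgeFinset]
      exact hab
    rw [← hTeq] at this
    obtain ⟨i, hi, hE⟩ := Finset.mem_image.mp this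
    exact ⟨i, Finset.mem_range.mp hi, hE.symm⟩
  refine ⟨RelIso.symm (RelIso.mk (Equiv.ofBijective g gbij) ?_)⟩
  intro a b
  show G.Adj (g a) (g b) ↔ (SimpleGraph.pathGraph n).Adj a b
  rw [SimpleGraph.pathGraph_adj]
  constructor
  · intro hab
    obtain ⟨i, hi, hE⟩ := hedge_char _ _ hab
    rw [Sym2.eq_iff] at hE
    rcases hE with ⟨h1, h2⟩ | ⟨h1, h2⟩ <;>
      [(have e1 := hinj _ _ (hvlt a) (by omega) h1;
        have e2 := hinj _ _ (hvlt b) (by omega) h2);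
       (have e1 := hinj _ _ (hvlt a) (by omega) h1;
        have e2 := hinj _ _ (hvlt b) (by omega) h2)] <;> omega
  · intro hab
    rcases hab with h1 | h1
    · have := hadj a.val (by have := b.isLt; omega)
      rwa [h1] at this
    · have := hadj b.val (by have := a.isLt; omega)
      rw [h1] at this
      exact this.symm

end PathLemma

section StarLemma

open SimpleGraph

variable {n : ℕ}

lemma star_iso_of_degrees (hn : 2 ≤ n) (G : SimpleGraph (Fin n)) (hconn : G.Connected)
    [DecidableRel G.Adj]
    (hdeg : ∀ v, G.degree v = 1 ∨ G.degree v = n - 1)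
    (hsum : ∑ v, G.degree v = 2 * (n - 1)) :
    Nonempty (G ≃g completeBipartiteGraph (Fin 1) (Fin (n - 1))) := by
  classical
  -- find the center
  obtain ⟨c, hc, hrest⟩ : ∃ c, G.degree c = n - 1 ∧ ∀ v, v ≠ c → G.degree v = 1 := by
    rcases Nat.eq_or_lt_of_le hn with h2 | h3
    · -- n = 2
      have hz : (0 : ℕ) < n := by omega
      refine ⟨⟨0, hz⟩, ?_, fun v _ => ?_⟩
      · rcases hdeg ⟨0, hz⟩ with h | h <;> omega
      · rcases hdeg v with h | h <;> omega
    · obtain ⟨c, hc⟩ : ∃ c, G.degree c = n - 1 := by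
        by_contra hcon
        push_neg at hcon
        have h1 : ∀ v, G.degree v = 1 := fun v => (hdeg v).resolve_right (hcon v)
        have : ∑ v, G.degree v = n := by
          rw [Finset.sum_congr rfl fun v _ => h1 v]
          simp [Finset.card_univ]
        omega
      refine ⟨c, hc, fun v hv => ?_⟩
      by_contra hcon
      have hvdeg : G.degree v = n - 1 := (hdeg v).resolve_left hcon
      -- sum too big
      have hsub : ({c, v} : Finset (Fin n)) ⊆ Finset.univ := Finset.subset_univ _
      have hsplit : ∑ w ∈ Finset.univ, G.degree w =
          ∑ w ∈ ({c, v} : Finset (Fin n)), G.degree w +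
          ∑ w ∈ Finset.univ \ ({c, v} : Finset (Fin n)), G.degree w := by
        rw [← Finset.sum_sdiff hsub]; ring
      have h1 : ∑ w ∈ ({c, v} : Finset (Fin n)), G.degree w = 2 * (n - 1) := by
        rw [Finset.sum_pair (Ne.symm hv)]
        omega
      have h2 : 0 < ∑ w ∈ Finset.univ \ ({c, v} : Finset (Fin n)), G.degree w := by
        have : (Finset.univ \ ({c, v} : Finset (Fin n))).Nonempty := by
          rw [← Finset.card_pos, Finset.card_sdiff_of_subset hsub, Finset.card_pair (Ne.symm hv)]
          simp only [Finset.card_univ, Fintype.card_fin]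
          omega
        obtain ⟨w, hw⟩ := this
        refine Finset.sum_pos' (fun _ _ => Nat.zero_le _) ⟨w, hw, ?_⟩
        rcases hdeg w with h | h <;> omega
      omega
  -- adjacency characterization
  have hcadj : ∀ v, v ≠ c → G.Adj c v := by
    intro v hv
    have hsub : G.neighborFinset c ⊆ Finset.univ.erase c := by
      intro w hw
      rw [SimpleGraph.mem_neighborFinset] at hw
      exact Finset.mem_erase.mpr ⟨(G.ne_of_adj hw).symm, Finset.mem_univ _⟩
    have hcard : (Finset.univ.erase c).card = n - 1 := by
      rw [Finset.card_erase_of_mem (Finset.mem_univ _)]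
      simp
    have := Finset.eq_of_subset_of_card_le hsub (by rw [hcard, ← hc]; rfl)
    have hv' : v ∈ Finset.univ.erase c := Finset.mem_erase.mpr ⟨hv, Finset.mem_univ _⟩
    rw [← this, SimpleGraph.mem_neighborFinset] at hv'
    exact hv'
  have hchar : ∀ a b, G.Adj a b ↔ ((a = c ∧ b ≠ c) ∨ (b = c ∧ a ≠ c)) := by
    intro a b
    constructor
    · intro hab
      by_cases ha : a = c
      · exact Or.inl ⟨ha, by rintro rfl; exact G.irrefl (ha ▸ hab)⟩
      · refine Or.inr ⟨?_, ha⟩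
        have h1 : G.degree a = 1 := hrest a ha
        have hac : G.Adj a c := (hcadj a ha).symm
        exact neighbors_of_deg_one h1 hac b hab
    · rintro (⟨rfl, hb⟩ | ⟨rfl, ha⟩)
      · exact hcadj b hb
      · exact (hcadj a ha).symm
  -- build the equivalence
  have hcard1 : Fintype.card {x : Fin n // x = c} = 1 := Fintype.card_subtype_eq c
  have hcard2 : Fintype.card {x : Fin n // ¬ x = c} = n - 1 := by
    rw [Fintype.card_subtype_compl, hcard1]
    simp
  set eL : {x : Fin n // x = c} ≃ Fin 1 := Fintype.equivFinOfCardEq hcard1 with heL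
  set eR : {x : Fin n // ¬ x = c} ≃ Fin (n - 1) := Fintype.equivFinOfCardEq hcard2 with heR
  set e : Fin n ≃ Fin 1 ⊕ Fin (n - 1) :=
    (Equiv.sumCompl (· = c)).symm.trans (Equiv.sumCongr eL eR) with he
  have hside : ∀ v : Fin n, (e v).isLeft = true ↔ v = c := by
    intro v
    by_cases hv : v = c
    · subst hv
      simp [he, Equiv.sumCompl_symm_apply_of_pos (p := (· = v)) rfl]
    · simp [he, Equiv.sumCompl_symm_apply_of_neg (p := (· = c)) hv, hv]
  refine ⟨RelIso.mk e ?_⟩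
  intro a b
  show (completeBipartiteGraph (Fin 1) (Fin (n - 1))).Adj (e a) (e b) ↔ G.Adj a b
  rw [completeBipartiteGraph_adj, hchar]
  have hA := hside a
  have hB := hside b
  constructor
  · rintro (⟨h1, h2⟩ | ⟨h1, h2⟩)
    · refine Or.inl ⟨hA.mp h1, fun hE => ?_⟩
      rw [← hB, Sum.isLeft_iff] at hE
      obtain ⟨x, hx⟩ := hE
      rw [hx] at h2
      simp at h2
    · refine Or.inr ⟨hB.mp h2, fun hE => ?_⟩
      rw [← hA, Sum.isLeft_iff] at hE
      obtain ⟨x, hx⟩ := hE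
      rw [hx] at h1
      simp at h1
  · rintro (⟨h1, h2⟩ | ⟨h1, h2⟩)
    · refine Or.inl ⟨hA.mpr h1, ?_⟩
      have : ¬ (e b).isLeft = true := fun hE => h2 (hB.mp hE)
      rwa [Sum.not_isLeft] at this
    · refine Or.inr ⟨?_, hB.mpr h1⟩
      have : ¬ (e a).isLeft = true := fun hE => h2 (hA.mp hE)
      rwa [Sum.not_isLeft] at this

end StarLemma

section Converse

open SimpleGraph

lemma iso_degree_eq {V W : Type*} [Fintype V] [Fintype W] [DecidableEq V] [DecidableEq W]
    {G : SimpleGraph V} {H : SimpleGraph W} [DecidableRel G.Adj] [DecidableRel H.Adj]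
    (φ : G ≃g H) (v : V) : G.degree v = H.degree (φ v) := by
  rw [← SimpleGraph.card_neighborSet_eq_degree, ← SimpleGraph.card_neighborSet_eq_degree]
  exact Fintype.card_congr (φ.mapNeighborSet v)

lemma pathGraph_degree_mem {n : ℕ} (hn : 2 ≤ n) [DecidableRel (SimpleGraph.pathGraph n).Adj]
    (v : Fin n) : (SimpleGraph.pathGraph n).degree v = 1 ∨
      (SimpleGraph.pathGraph n).degree v = 2 := by
  have hpos : 0 < (SimpleGraph.pathGraph n).degree v := by
    rw [SimpleGraph.degree_pos_iff_exists_adj]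
    exact exists_adj_of_preconnected (SimpleGraph.pathGraph_preconnected n) (by simpa) v
  have hle : (SimpleGraph.pathGraph n).degree v ≤ 2 := by
    have : ((SimpleGraph.pathGraph n).neighborFinset v).card ≤
        (Finset.univ : Finset Bool).card := by
      apply Finset.card_le_card_of_injOn (fun u => decide (u.val < v.val))
        (fun _ _ => Finset.mem_univ _)
      intro a ha b hb hE
      rw [Finset.mem_coe, SimpleGraph.mem_neighborFinset, SimpleGraph.pathGraph_adj] at ha hb
      simp only [decide_eq_decide] at hE
      apply Fin.ext
      omega
    simpa using this
  omega

lemma star_degree_mem {m : ℕ} (v : Fin 1 ⊕ Fin m)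
    [DecidableRel (completeBipartiteGraph (Fin 1) (Fin m)).Adj] :
    (completeBipartiteGraph (Fin 1) (Fin m)).degree v = 1 ∨
      (completeBipartiteGraph (Fin 1) (Fin m)).degree v = m := by
  cases v with
  | inl x =>
    right
    have : (completeBipartiteGraph (Fin 1) (Fin m)).neighborFinset (Sum.inl x) =
        Finset.univ.map ⟨Sum.inr, Sum.inr_injective⟩ := by
      ext w
      rw [SimpleGraph.mem_neighborFinset, completeBipartiteGraph_adj]
      cases w <;> simp
    rw [SimpleGraph.degree, this, Finset.card_map]
    simp
  | inr y =>
    left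
    have : (completeBipartiteGraph (Fin 1) (Fin m)).neighborFinset (Sum.inr y) =
        Finset.univ.map ⟨Sum.inl, Sum.inl_injective⟩ := by
      ext w
      rw [SimpleGraph.mem_neighborFinset, completeBipartiteGraph_adj]
      cases w with
      | inl x => simp [Fin.eq_zero x]
      | inr => simp
    rw [SimpleGraph.degree, this, Finset.card_map]
    simp

end Converse

section Arith

lemma aux_low {d : ℕ} (hd : 1 ≤ d) :
    (3 - (d:ℝ))/2 ≤ 1/(d:ℝ) ∧ (1/(d:ℝ) = (3 - (d:ℝ))/2 ↔ d = 1 ∨ d = 2) := by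
  match d, hd with
  | 1, _ => norm_num
  | 2, _ => norm_num
  | (k+3), _ =>
    have h1 : (0:ℝ) < (k:ℝ) + 3 := by positivity
    have h3 : 0 < 1/((k:ℝ)+3) := by positivity
    refine ⟨by push_cast; linarith, ?_, ?_⟩
    · intro hE; push_cast at hE; linarith
    · rintro (h | h) <;> omega

lemma aux_up {n d : ℕ} (hn : 2 ≤ n) (hd1 : 1 ≤ d) (hdn : d ≤ n - 1) :
    1/(d:ℝ) ≤ 1 - ((d:ℝ) - 1)/((n:ℝ)-1) ∧
    (1/(d:ℝ) = 1 - ((d:ℝ)-1)/((n:ℝ)-1) ↔ d = 1 ∨ d = n - 1) := by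
  have hx : (1:ℝ) ≤ (d:ℝ) := by exact_mod_cast hd1
  have hn' : (2:ℝ) ≤ (n:ℝ) := by exact_mod_cast hn
  have hN : (1:ℝ) ≤ (n:ℝ) - 1 := by linarith
  have hcast : ((n-1:ℕ):ℝ) = (n:ℝ) - 1 := by
    rw [Nat.cast_sub (by omega)]; norm_num
  have hxN : (d:ℝ) ≤ (n:ℝ) - 1 := by
    rw [← hcast]; exact_mod_cast hdn
  have hd0 : (0:ℝ) < d := by linarith
  have hN0 : (0:ℝ) < (n:ℝ)-1 := by linarith
  have key : 1 - ((d:ℝ)-1)/((n:ℝ)-1) - 1/(d:ℝ) =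
      ((d:ℝ)-1)*(((n:ℝ)-1)-(d:ℝ))/((d:ℝ)*((n:ℝ)-1)) := by
    field_simp
    ring
  have hnum : 0 ≤ ((d:ℝ)-1)*(((n:ℝ)-1)-(d:ℝ)) := mul_nonneg (by linarith) (by linarith)
  have hden : (0:ℝ) < (d:ℝ)*((n:ℝ)-1) := mul_pos hd0 hN0
  constructor
  · have := div_nonneg hnum hden.le
    linarith
  constructor
  · intro hE
    have h1 : ((d:ℝ)-1)*(((n:ℝ)-1)-(d:ℝ))/((d:ℝ)*((n:ℝ)-1)) = 0 := by
      rw [← key]; linarith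
    have h0 : ((d:ℝ)-1)*(((n:ℝ)-1)-(d:ℝ)) = 0 := by
      rcases div_eq_zero_iff.mp h1 with h | h
      · exact h
      · exact absurd h hden.ne'
    rcases mul_eq_zero.mp h0 with h | h
    · left
      have : (d:ℝ) = 1 := by linarith
      exact_mod_cast this
    · right
      have : (d:ℝ) = ((n-1:ℕ):ℝ) := by rw [hcast]; linarith
      exact_mod_cast this
  · rintro (rfl | h)
    · norm_num
    · subst h
      rw [hcast]
      field_simp
      ring

end Arith

end AuxiliaryLemmas

/-- Bounds for the inverse degree of a tree: `(n+2)/2 ≤ ρ(G) ≤ (n-1) + 1/(n-1)`,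
with the lower bound attained exactly by the path `P_n` and the upper bound
exactly by the star `S_n = K_{1,n-1}`. -/
theorem tree_inverse_degree_bounds (n : ℕ) (hn : 2 ≤ n)
    (G : SimpleGraph (Fin n)) (hconn : G.Connected)
    (hedges : G.edgeSet.ncard = n - 1) :
    (((n : ℝ) + 2) / 2 ≤ inverseDegree G ∧
      inverseDegree G ≤ ((n : ℝ) - 1) + 1 / ((n : ℝ) - 1)) ∧
    (inverseDegree G = ((n : ℝ) + 2) / 2 ↔
      Nonempty (G ≃g SimpleGraph.pathGraph n)) ∧
    (inverseDegree G = ((n : ℝ) - 1) + 1 / ((n : ℝ) - 1) ↔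
      Nonempty (G ≃g completeBipartiteGraph (Fin 1) (Fin (n - 1)))) := by
  classical
  have hedgecount : G.edgeFinset.card = n - 1 := by
    have h := Set.ncard_eq_toFinset_card' G.edgeSet
    rw [hedges] at h
    rw [SimpleGraph.edgeFinset]
    exact h.symm
  have hsum : ∑ v, G.degree v = 2 * (n - 1) := by
    rw [SimpleGraph.sum_degrees_eq_twice_card_edges, hedgecount]
  have hd1 : ∀ v, 1 ≤ G.degree v := fun v =>
    (SimpleGraph.degree_pos_iff_exists_adj _ _).mpr
      (exists_adj_of_preconnected hconn.preconnected (by simpa) v)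
  have hdn : ∀ v, G.degree v ≤ n - 1 := fun v => by
    have := G.degree_lt_card_verts v
    simp only [Fintype.card_fin] at this
    omega
  have hID : inverseDegree G = ∑ v, 1/((G.degree v : ℕ):ℝ) := by
    unfold inverseDegree
    refine Finset.sum_congr rfl fun v _ => ?_
    congr 2
    rw [← Nat.card_coe_set_eq, Nat.card_eq_fintype_card,
      SimpleGraph.card_neighborSet_eq_degree]
  have hDsum : ∑ v : Fin n, ((G.degree v : ℕ):ℝ) = 2*(n:ℝ) - 2 := by
    have h2 : ((∑ v, G.degree v : ℕ) : ℝ) = ∑ v, ((G.degree v : ℕ) : ℝ) := by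
      push_cast; rfl
    rw [← h2, hsum]
    push_cast [Nat.cast_sub (by omega : 1 ≤ n)]
    ring
  have hcardu : (Finset.univ : Finset (Fin n)).card = n := by simp
  -- lower bound
  have hlow_terms : ∀ v : Fin n, (3 - ((G.degree v:ℕ):ℝ))/2 ≤ 1/((G.degree v:ℕ):ℝ) :=
    fun v => (aux_low (hd1 v)).1
  have hlowsum : ∑ v : Fin n, (3 - ((G.degree v:ℕ):ℝ))/2 = ((n:ℝ)+2)/2 := by
    rw [← Finset.sum_div, Finset.sum_sub_distrib, Finset.sum_const, hDsum, hcardu]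
    ring
  have hlow : ((n:ℝ)+2)/2 ≤ inverseDegree G := by
    rw [hID, ← hlowsum]
    exact Finset.sum_le_sum (fun v _ => hlow_terms v)
  have hlow_iff : inverseDegree G = ((n:ℝ)+2)/2 ↔
      ∀ v, G.degree v = 1 ∨ G.degree v = 2 := by
    rw [hID]
    constructor
    · intro hE
      have hzero : ∑ v : Fin n,
          (1/((G.degree v:ℕ):ℝ) - (3 - ((G.degree v:ℕ):ℝ))/2) = 0 := by
        rw [Finset.sum_sub_distrib, hlowsum, hE, sub_self]
      have hterm := (Finset.sum_eq_zero_iff_of_nonneg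
        (fun v _ => by have := hlow_terms v; linarith)).mp hzero
      intro v
      have hv := hterm v (Finset.mem_univ v)
      exact (aux_low (hd1 v)).2.mp (by linarith)
    · intro hall
      rw [← hlowsum]
      exact Finset.sum_congr rfl fun v _ => (aux_low (hd1 v)).2.mpr (hall v)
  -- upper bound
  have hn' : (2:ℝ) ≤ (n:ℝ) := by exact_mod_cast hn
  have hup_terms : ∀ v : Fin n,
      1/((G.degree v:ℕ):ℝ) ≤ 1 - (((G.degree v:ℕ):ℝ)-1)/((n:ℝ)-1) :=
    fun v => (aux_up hn (hd1 v) (hdn v)).1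
  have hupsum : ∑ v : Fin n, (1 - (((G.degree v:ℕ):ℝ)-1)/((n:ℝ)-1)) =
      ((n:ℝ)-1) + 1/((n:ℝ)-1) := by
    rw [Finset.sum_sub_distrib, Finset.sum_const, hcardu, ← Finset.sum_div,
      Finset.sum_sub_distrib, hDsum, Finset.sum_const, hcardu]
    have hNne : ((n:ℝ) - 1) ≠ 0 := by linarith
    field_simp
    ring
  have hup : inverseDegree G ≤ ((n:ℝ)-1) + 1/((n:ℝ)-1) := by
    rw [hID, ← hupsum]
    exact Finset.sum_le_sum (fun v _ => hup_terms v)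
  have hup_iff : inverseDegree G = ((n:ℝ)-1) + 1/((n:ℝ)-1) ↔
      ∀ v, G.degree v = 1 ∨ G.degree v = n - 1 := by
    rw [hID]
    constructor
    · intro hE
      have hzero : ∑ v : Fin n,
          ((1 - (((G.degree v:ℕ):ℝ)-1)/((n:ℝ)-1)) - 1/((G.degree v:ℕ):ℝ)) = 0 := by
        rw [Finset.sum_sub_distrib, hupsum, hE, sub_self]
      have hterm := (Finset.sum_eq_zero_iff_of_nonneg
        (fun v _ => by have := hup_terms v; linarith)).mp hzero
      intro v
      have hv := hterm v (Finset.mem_univ v)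
      exact (aux_up hn (hd1 v) (hdn v)).2.mp (by linarith)
    · intro hall
      rw [← hupsum]
      exact Finset.sum_congr rfl fun v _ => (aux_up hn (hd1 v) (hdn v)).2.mpr (hall v)
  refine ⟨⟨hlow, hup⟩, ?_, ?_⟩
  · rw [hlow_iff]
    constructor
    · intro hdeg
      exact path_iso_of_degrees hn G hconn hdeg hsum hedgecount
    · rintro ⟨φ⟩ v
      rw [iso_degree_eq φ v]
      exact pathGraph_degree_mem hn (φ v)
  · rw [hup_iff]
    constructor
    · intro hdeg
      exact star_iso_of_degrees hn G hconn hdeg hsum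
    · rintro ⟨φ⟩ v
      rw [iso_degree_eq φ v]
      exact star_degree_mem (φ v)
end

section
/- Let G be a bicyclic graph (a connected simple graph on n ≥ 4 vertices with n+1 edges). Then the inverse degree ρ(G) = Σ_{v} 1/deg(v) satisfies (n−2)/2 + 2/3 ≤ ρ(G) ≤ (n−3) + 1/(n−1) + 1/3; the upper bound is attained by a graph with degree sequence (n−1, 3, 2, 2, 1^{n−4}) and the lower bound by a graph with degree sequence (3, 3, 2^{n−2}). -/
open Finset SimpleGraph

/-! ### Auxiliary analytic lemmas -/

lemma pair_ineq (c x y : ℝ) (hc : 0 < c) (hx : c ≤ x) (hy : c ≤ y) :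
    1/x + 1/y ≤ 1/c + 1/(x+y-c) := by
  have hx0 : 0 < x := lt_of_lt_of_le hc hx
  have hy0 : 0 < y := lt_of_lt_of_le hc hy
  have hz : 0 < x + y - c := by linarith
  rw [div_add_div _ _ (ne_of_gt hx0) (ne_of_gt hy0),
    div_add_div _ _ (ne_of_gt hc) (ne_of_gt hz), div_le_div_iff₀ (by positivity) (by positivity)]
  nlinarith [mul_nonneg (sub_nonneg.2 hx) (sub_nonneg.2 hy)]

lemma chain_ineq {ι : Type*} (s : Finset ι) (hs : s.Nonempty) (d : ι → ℝ)
    (hd : ∀ i ∈ s, 2 ≤ d i) :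
    ∑ i ∈ s, 1 / d i ≤ ((s.card : ℝ) - 1)/2 + 1/(∑ i ∈ s, d i - 2*((s.card : ℝ) - 1)) := by
  induction hs using Finset.Nonempty.cons_induction with
  | singleton i => simp
  | cons a s ha hs ih =>
    have hd' : ∀ i ∈ s, 2 ≤ d i := fun i hi => hd i (Finset.mem_cons_of_mem hi)
    have hsum2 : 2 * (s.card : ℝ) ≤ ∑ i ∈ s, d i := by
      calc 2 * (s.card : ℝ) = ∑ _i ∈ s, (2:ℝ) := by rw [Finset.sum_const]; ring
      _ ≤ _ := Finset.sum_le_sum hd'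
    have ih' := ih hd'
    rw [Finset.sum_cons, Finset.sum_cons, Finset.card_cons]
    have hda : 2 ≤ d a := hd a (Finset.mem_cons_self a s)
    have key := pair_ineq 2 (d a) (∑ i ∈ s, d i - 2*((s.card : ℝ) - 1)) (by norm_num)
      hda (by have := hs.card_pos; nlinarith)
    push_cast
    calc 1 / d a + ∑ i ∈ s, 1 / d i
        ≤ 1 / d a + (((s.card : ℝ) - 1)/2 + 1/(∑ i ∈ s, d i - 2*((s.card : ℝ) - 1))) := by
          linarith
    _ ≤ 1/2 + 1/(d a + (∑ i ∈ s, d i - 2*((s.card : ℝ) - 1)) - 2) + ((s.card : ℝ) - 1)/2 := by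
          linarith
    _ = ((s.card : ℝ) + 1 - 1)/2 + 1/(d a + ∑ i ∈ s, d i - 2*((s.card : ℝ) + 1 - 1)) := by
          ring_nf

/-! ### The core arithmetic bounds for degree sequences -/

lemma sum_inv_bounds (n : ℕ) (hn : 4 ≤ n) (d : Fin n → ℕ)
    (hd1 : ∀ v, 1 ≤ d v) (hdn : ∀ v, d v ≤ n - 1)
    (hsum : ∑ v, d v = 2*n+2)
    (hB : 4 ≤ (univ.filter (fun v => 2 ≤ d v)).card) :
    ((n : ℝ) - 2) / 2 + 2 / 3 ≤ ∑ v, (1:ℝ)/(d v) ∧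
      ∑ v, (1:ℝ)/(d v) ≤ ((n : ℝ) - 3) + 1 / ((n : ℝ) - 1) + 1 / 3 := by
  have hsumR : ∑ v, (d v : ℝ) = 2*(n:ℝ)+2 := by
    rw [← Nat.cast_sum, hsum]; push_cast; ring
  constructor
  · -- lower bound
    have hterm : ∀ v : Fin n, (5:ℝ)/6 - (d v)/6 ≤ 1/(d v) := by
      intro v
      have h1 := hd1 v
      rcases le_or_gt (d v) 4 with h | h
      · interval_cases hdv : (d v) <;> norm_num
      · have : (5:ℝ) ≤ (d v : ℝ) := by exact_mod_cast h
        have hpos : (0:ℝ) < (d v : ℝ) := by positivity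
        have h2 : (5:ℝ)/6 - (d v)/6 ≤ 0 := by linarith
        have h3 : (0:ℝ) ≤ 1/(d v) := by positivity
        linarith
    calc ((n : ℝ) - 2) / 2 + 2 / 3 = 5*(n:ℝ)/6 - (2*(n:ℝ)+2)/6 := by ring
    _ = ∑ v : Fin n, ((5:ℝ)/6 - (d v)/6) := by
        rw [Finset.sum_sub_distrib, Finset.sum_const, ← Finset.sum_div, hsumR]
        simp; ring
    _ ≤ ∑ v, (1:ℝ)/(d v) := Finset.sum_le_sum (fun v _ => hterm v)
  · -- upper bound
    set B := univ.filter (fun v => 2 ≤ d v) with hBdef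
    set m := B.card with hm
    have hmn : m ≤ n := by
      have := Finset.card_le_card (Finset.subset_univ B)
      simpa [hm] using this
    have hnotB : ∀ v ∈ univ.filter (fun v => ¬ 2 ≤ d v), d v = 1 := by
      intro v hv
      rw [mem_filter] at hv
      have := hd1 v; omega
    have hLcard : (univ.filter (fun v => ¬ 2 ≤ d v)).card = n - m := by
      have := Finset.card_filter_add_card_filter_not (s := (univ : Finset (Fin n)))
        (p := fun v => 2 ≤ d v)
      simp only [Finset.card_univ, Fintype.card_fin] at this
      simp only [hm, hBdef]
      omega
    have hsplit : ∑ v, (1:ℝ)/(d v) = (∑ v ∈ B, (1:ℝ)/(d v)) + ((n:ℝ) - m) := by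
      rw [← Finset.sum_filter_add_sum_filter_not univ (fun v => 2 ≤ d v) (fun v => (1:ℝ)/(d v))]
      congr 1
      have : ∀ v ∈ univ.filter (fun v => ¬ 2 ≤ d v), (1:ℝ)/(d v) = 1 := by
        intro v hv; rw [hnotB v hv]; norm_num
      rw [Finset.sum_congr rfl this, Finset.sum_const, hLcard, nsmul_eq_mul, mul_one,
        Nat.cast_sub hmn]
    have hsumB : ∑ v ∈ B, (d v : ℝ) = (n:ℝ) + m + 2 := by
      have hs : ∑ v ∈ B, d v + ∑ v ∈ univ.filter (fun v => ¬ 2 ≤ d v), d v = 2*n+2 := by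
        rw [Finset.sum_filter_add_sum_filter_not univ (fun v => 2 ≤ d v) d]; exact hsum
      have hs2 : ∑ v ∈ univ.filter (fun v => ¬ 2 ≤ d v), d v = n - m := by
        rw [Finset.sum_congr rfl hnotB, Finset.sum_const, hLcard, smul_eq_mul, mul_one]
      have hnat : ∑ v ∈ B, d v = n + m + 2 := by omega
      rw [← Nat.cast_sum, hnat]; push_cast; ring
    have hdB : ∀ v ∈ B, 2 ≤ (d v : ℝ) := by
      intro v hv; rw [hBdef, mem_filter] at hv; exact_mod_cast hv.2
    have hBne : B.Nonempty := Finset.card_pos.1 (by omega)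
    rcases eq_or_lt_of_le hB with h4 | h5
    · -- m = 4 case
      obtain ⟨a, haB, hamax⟩ := Finset.exists_max_image B d hBne
      have hB'card : (B.erase a).card = 3 := by
        rw [Finset.card_erase_of_mem haB, ← hm, ← h4]
      have hB'ne : (B.erase a).Nonempty := Finset.card_pos.1 (by omega)
      obtain ⟨b, hbB', hbmax⟩ := Finset.exists_max_image (B.erase a) d hB'ne
      have hB''card : ((B.erase a).erase b).card = 2 := by
        rw [Finset.card_erase_of_mem hbB', hB'card]
      obtain ⟨c, e, hce, hBce⟩ := Finset.card_eq_two.1 hB''card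
      have hbB : b ∈ B := Finset.mem_of_mem_erase hbB'
      have hcB'' : c ∈ (B.erase a).erase b := by rw [hBce]; simp
      have heB'' : e ∈ (B.erase a).erase b := by rw [hBce]; simp [hce]
      have hcB : c ∈ B := Finset.mem_of_mem_erase (Finset.mem_of_mem_erase hcB'')
      have heB : e ∈ B := Finset.mem_of_mem_erase (Finset.mem_of_mem_erase heB'')
      have hdecomp : ∀ f : Fin n → ℝ, ∑ v ∈ B, f v = f a + f b + f c + f e := by
        intro f
        rw [← Finset.insert_erase haB, Finset.sum_insert (Finset.notMem_erase a B),
          ← Finset.insert_erase hbB', Finset.sum_insert (Finset.notMem_erase b _),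
          hBce, Finset.sum_pair hce]
        ring
      have hm4R : (m:ℝ) = 4 := by exact_mod_cast h4.symm
      have hsum' := hsumB
      rw [hdecomp (fun v => (d v : ℝ))] at hsum'
      have hnatsum : d a + d b + d c + d e = n + 6 := by
        have hc : ((d a + d b + d c + d e : ℕ) : ℝ) = ((n + 6 : ℕ) : ℝ) := by
          push_cast; linarith
        exact_mod_cast hc
      have h2a : 2 ≤ d a := (mem_filter.1 haB).2
      have h2b : 2 ≤ d b := (mem_filter.1 hbB).2
      have h2c : 2 ≤ d c := (mem_filter.1 hcB).2
      have h2e : 2 ≤ d e := (mem_filter.1 heB).2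
      have hab : d b ≤ d a := hamax b hbB
      have hbc : d c ≤ d b := hbmax c (Finset.mem_of_mem_erase hcB'')
      have hbe : d e ≤ d b := hbmax e (Finset.mem_of_mem_erase heB'')
      have hale : d a ≤ n - 1 := hdn a
      have hb3 : 3 ≤ d b := by omega
      have p1 := pair_ineq 2 (d a) (d e) (by norm_num) (by exact_mod_cast h2a)
        (by exact_mod_cast h2e)
      have p2 := pair_ineq 2 (d b) (d c) (by norm_num) (by exact_mod_cast h2b)
        (by exact_mod_cast h2c)
      have hae3 : (3:ℝ) ≤ (d a : ℝ) + (d e : ℝ) - 2 := by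
        have h3a : 3 ≤ d a := by omega
        have h1 : (3:ℝ) ≤ (d a : ℝ) := by exact_mod_cast h3a
        have h2 : (2:ℝ) ≤ (d e : ℝ) := by exact_mod_cast h2e
        linarith
      have hbc3 : (3:ℝ) ≤ (d b : ℝ) + (d c : ℝ) - 2 := by
        have h1 : (3:ℝ) ≤ (d b : ℝ) := by exact_mod_cast hb3
        have h2 : (2:ℝ) ≤ (d c : ℝ) := by exact_mod_cast h2c
        linarith
      have p3 := pair_ineq 3 ((d a : ℝ) + (d e : ℝ) - 2) ((d b : ℝ) + (d c : ℝ) - 2)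
        (by norm_num) hae3 hbc3
      have htot : ∑ v ∈ B, (1:ℝ)/(d v) ≤ 4/3 + 1/((n:ℝ)-1) := by
        rw [hdecomp (fun v => (1:ℝ)/(d v))]
        have heq : (d a : ℝ) + (d e : ℝ) - 2 + ((d b : ℝ) + (d c : ℝ) - 2) - 3 = (n:ℝ) - 1 := by
          linarith
        rw [heq] at p3
        linarith
      rw [hsplit, hm4R]
      linarith
    · -- m ≥ 5 case
      have hchain := chain_ineq B (Finset.card_pos.1 (by omega)) (fun v => (d v : ℝ)) hdB
      rw [hsumB, ← hm] at hchain
      have hden : (n:ℝ) + (m:ℝ) + 2 - 2*((m:ℝ)-1) = (n:ℝ) + 4 - m := by ring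
      rw [hden] at hchain
      rw [hsplit]
      have hm5 : (5:ℝ) ≤ (m:ℝ) := by exact_mod_cast h5
      have hmnR : (m:ℝ) ≤ (n:ℝ) := by exact_mod_cast hmn
      have hnR : (4:ℝ) ≤ (n:ℝ) := by exact_mod_cast hn
      rcases eq_or_lt_of_le hm5 with hm5' | hm6
      · rw [← hm5'] at hchain ⊢
        have heq5 : (n:ℝ) + 4 - 5 = (n:ℝ) - 1 := by ring
        rw [heq5] at hchain
        linarith
      · have hm6' : (6:ℝ) ≤ (m:ℝ) := by
          have : (5:ℕ) < m := by exact_mod_cast hm6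
          exact_mod_cast this
        have hden4 : (4:ℝ) ≤ (n:ℝ) + 4 - m := by linarith
        have hfrac : 1/((n:ℝ) + 4 - m) ≤ 1/4 :=
          one_div_le_one_div_of_le (by norm_num) hden4
        have hpos : (0:ℝ) < 1/((n:ℝ)-1) := by
          apply one_div_pos.2; linarith
        linarith

/-! ### At least four vertices of degree ≥ 2 in a bicyclic graph -/

/-- auxiliary graph: edges of `G` both of whose endpoints have degree ≥ 2 -/
def coreG {n : ℕ} (G : SimpleGraph (Fin n)) [DecidableRel G.Adj] : SimpleGraph (Fin n) where
  Adj u v := G.Adj u v ∧ 2 ≤ G.degree u ∧ 2 ≤ G.degree v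
  symm := by constructor; intro u v ⟨h, h1, h2⟩; exact ⟨h.symm, h2, h1⟩
  loopless := by constructor; intro v ⟨h, _⟩; exact G.loopless.irrefl v h

instance {n : ℕ} (G : SimpleGraph (Fin n)) [DecidableRel G.Adj] :
    DecidableRel (coreG G).Adj := fun u v => by
  unfold coreG; infer_instance

lemma card_B_ge_four {n : ℕ} (G : SimpleGraph (Fin n)) [DecidableRel G.Adj]
    (hn : 4 ≤ n) (hconn : G.Connected)
    (hedges : G.edgeFinset.card = n + 1) :
    4 ≤ (univ.filter (fun v => 2 ≤ G.degree v)).card := by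
  classical
  set B := univ.filter (fun v => 2 ≤ G.degree v) with hB
  set m := B.card with hm
  have hdeg1 : ∀ v, 1 ≤ G.degree v := fun v => by
    have : 0 < G.degree v := by
      rw [G.degree_pos_iff_exists_adj v]
      obtain ⟨u, hu⟩ : ∃ u : Fin n, u ≠ v :=
        Fintype.exists_ne_of_one_lt_card (by simp; omega) v
      obtain ⟨p⟩ := hconn.preconnected v u
      cases p with
      | nil => exact absurd rfl hu
      | cons h _ => exact ⟨_, h⟩
    omega
  set L := univ.filter (fun v => ¬ 2 ≤ G.degree v) with hL
  have hLcard : L.card = n - m := by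
    have := Finset.card_filter_add_card_filter_not (s := univ)
      (p := fun v => 2 ≤ G.degree v)
    simp only [Finset.card_univ, Fintype.card_fin] at this
    simp only [hL, hm, hB]
    omega
  have hmn : m ≤ n := by
    have := Finset.card_le_card (Finset.subset_univ B)
    simpa using this
  have hex : ∀ v : Fin n, ∃ w, G.Adj v w := fun v =>
    (G.degree_pos_iff_exists_adj v).1 (hdeg1 v)
  choose nbr hnbr using hex
  set EB := (coreG G).edgeFinset with hEB
  have hcover : G.edgeFinset ⊆ EB ∪ L.image (fun v => s(v, nbr v)) := by
    intro e he
    induction e with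
    | _ u v =>
      rw [mem_edgeFinset, mem_edgeSet] at he
      by_cases hu : 2 ≤ G.degree u
      · by_cases hv : 2 ≤ G.degree v
        · exact Finset.mem_union_left _ (by
            rw [hEB, mem_edgeFinset, mem_edgeSet]; exact ⟨he, hu, hv⟩)
        · have hnv : nbr v = u := by
            have h1 : G.degree v = 1 := by have := hdeg1 v; omega
            have hcard : (G.neighborFinset v).card ≤ 1 := le_of_eq h1
            exact Finset.card_le_one.1 hcard _ (by
              rw [mem_neighborFinset]; exact hnbr v) _ (by
              rw [mem_neighborFinset]; exact he.symm)
          refine Finset.mem_union_right _ (Finset.mem_image.2 ⟨v, ?_, ?_⟩)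
          · rw [hL, mem_filter]; exact ⟨mem_univ _, hv⟩
          · rw [hnv, Sym2.eq_swap]
      · have hnu : nbr u = v := by
          have h1 : G.degree u = 1 := by have := hdeg1 u; omega
          have hcard : (G.neighborFinset u).card ≤ 1 := le_of_eq h1
          exact Finset.card_le_one.1 hcard _ (by
            rw [mem_neighborFinset]; exact hnbr u) _ (by
            rw [mem_neighborFinset]; exact he)
        refine Finset.mem_union_right _ (Finset.mem_image.2 ⟨u, ?_, ?_⟩)
        · rw [hL, mem_filter]; exact ⟨mem_univ _, hu⟩
        · rw [hnu]
  have hEBlow : m + 1 ≤ EB.card := by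
    have h1 : (n:ℕ) + 1 ≤ (EB ∪ L.image (fun v => s(v, nbr v))).card := by
      rw [← hedges]; exact Finset.card_le_card hcover
    have h2 : (EB ∪ L.image (fun v => s(v, nbr v))).card ≤ EB.card + (n - m) := by
      calc _ ≤ EB.card + (L.image (fun v => s(v, nbr v))).card := Finset.card_union_le _ _
      _ ≤ EB.card + L.card := by gcongr; exact Finset.card_image_le
      _ = EB.card + (n - m) := by rw [hLcard]
    omega
  have hhand : ∑ v, (coreG G).degree v = 2 * EB.card :=
    (coreG G).sum_degrees_eq_twice_card_edges
  have hdegzero : ∀ v ∉ B, (coreG G).degree v = 0 := by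
    intro v hv
    rw [hB, mem_filter] at hv
    push_neg at hv
    have hv' := hv (mem_univ v)
    have hemp : (coreG G).neighborFinset v = ∅ := by
      refine Finset.eq_empty_iff_forall_notMem.2 (fun w hw => ?_)
      rw [mem_neighborFinset] at hw
      obtain ⟨_, h2, _⟩ := hw
      omega
    rw [SimpleGraph.degree, hemp, Finset.card_empty]
  have hdegle : ∀ v ∈ B, (coreG G).degree v ≤ m - 1 := by
    intro v hv
    have hsub : (coreG G).neighborFinset v ⊆ B.erase v := by
      intro w hw
      rw [mem_neighborFinset] at hw
      obtain ⟨hadj, _, hw2⟩ := hw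
      refine Finset.mem_erase.2 ⟨(G.ne_of_adj hadj).symm, ?_⟩
      rw [hB, mem_filter]; exact ⟨mem_univ _, hw2⟩
    calc (coreG G).degree v ≤ (B.erase v).card := Finset.card_le_card hsub
    _ = m - 1 := by rw [Finset.card_erase_of_mem hv]
  have hsum : ∑ v, (coreG G).degree v = ∑ v ∈ B, (coreG G).degree v := by
    rw [← Finset.sum_subset (Finset.subset_univ B)]
    intro v _ hv; exact hdegzero v hv
  have hup : 2 * EB.card ≤ m * (m - 1) := by
    rw [← hhand, hsum]
    calc ∑ v ∈ B, (coreG G).degree v ≤ ∑ _v ∈ B, (m-1) := Finset.sum_le_sum hdegle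
    _ = m * (m-1) := by rw [Finset.sum_const, smul_eq_mul]
  by_contra hlt
  push_neg at hlt
  interval_cases m <;> omega

/-! ### Extremal graphs -/

/-- the star on `Fin n` together with the two extra edges `{1,2}` and `{1,3}` -/
def H1 (n : ℕ) : SimpleGraph (Fin n) :=
  SimpleGraph.fromRel (fun u v => (u:ℕ) = 0 ∨ ((u:ℕ) = 1 ∧ ((v:ℕ) = 2 ∨ (v:ℕ) = 3)))

lemma H1_adj {n : ℕ} (u v : Fin n) : (H1 n).Adj u v ↔ (u:ℕ) ≠ (v:ℕ) ∧
    (((u:ℕ) = 0 ∨ ((u:ℕ) = 1 ∧ ((v:ℕ) = 2 ∨ (v:ℕ) = 3))) ∨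
     ((v:ℕ) = 0 ∨ ((v:ℕ) = 1 ∧ ((u:ℕ) = 2 ∨ (u:ℕ) = 3)))) := by
  rw [H1, SimpleGraph.fromRel_adj, ne_eq, Fin.ext_iff]

lemma H1_deg {n : ℕ} (hn : 4 ≤ n) (v : Fin n) :
    letI : DecidableRel (H1 n).Adj := fun _ _ => Classical.dec _
    (H1 n).degree v = if (v:ℕ) = 0 then n - 1 else if (v:ℕ) = 1 then 3
      else if (v:ℕ) < 4 then 2 else 1 := by
  letI : DecidableRel (H1 n).Adj := fun _ _ => Classical.dec _
  rcases Nat.lt_or_ge (v:ℕ) 4 with h4 | h4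
  · interval_cases h : (v:ℕ)
    · have hnb : (H1 n).neighborFinset v = univ.erase v := by
        ext w
        simp only [mem_neighborFinset, H1_adj, Finset.mem_erase, mem_univ, and_true, ne_eq,
          Fin.ext_iff]
        omega
      rw [degree, hnb, Finset.card_erase_of_mem (mem_univ v), Finset.card_univ,
        Fintype.card_fin]
      simp [h]
    · have hnb : (H1 n).neighborFinset v =
          {(⟨0, by omega⟩ : Fin n), ⟨2, by omega⟩, ⟨3, by omega⟩} := by
        ext w
        simp only [mem_neighborFinset, H1_adj, Finset.mem_insert, Finset.mem_singleton,
          Fin.ext_iff]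
        omega
      rw [degree, hnb,
        Finset.card_insert_of_notMem
          (by simp only [Finset.mem_insert, Finset.mem_singleton, Fin.ext_iff]; omega),
        Finset.card_insert_of_notMem
          (by simp only [Finset.mem_insert, Finset.mem_singleton, Fin.ext_iff]; omega),
        Finset.card_singleton]
      simp [h]
    · have hnb : (H1 n).neighborFinset v = {(⟨0, by omega⟩ : Fin n), ⟨1, by omega⟩} := by
        ext w
        simp only [mem_neighborFinset, H1_adj, Finset.mem_insert, Finset.mem_singleton,
          Fin.ext_iff]
        omega
      rw [degree, hnb,
        Finset.card_insert_of_notMem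
          (by simp only [Finset.mem_insert, Finset.mem_singleton, Fin.ext_iff]; omega),
        Finset.card_singleton]
      simp [h]
    · have hnb : (H1 n).neighborFinset v = {(⟨0, by omega⟩ : Fin n), ⟨1, by omega⟩} := by
        ext w
        simp only [mem_neighborFinset, H1_adj, Finset.mem_insert, Finset.mem_singleton,
          Fin.ext_iff]
        omega
      rw [degree, hnb,
        Finset.card_insert_of_notMem
          (by simp only [Finset.mem_insert, Finset.mem_singleton, Fin.ext_iff]; omega),
        Finset.card_singleton]
      simp [h]
  · have hnb : (H1 n).neighborFinset v = {(⟨0, by omega⟩ : Fin n)} := by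
      ext w
      simp only [mem_neighborFinset, H1_adj, Finset.mem_singleton, Fin.ext_iff]
      omega
    rw [degree, hnb, Finset.card_singleton]
    have h1 : ¬ (v:ℕ) = 0 := by omega
    have h2 : ¬ (v:ℕ) = 1 := by omega
    have h3 : ¬ (v:ℕ) < 4 := by omega
    simp [h1, h2, h3]

lemma H1_conn {n : ℕ} (hn : 4 ≤ n) : (H1 n).Connected := by
  have key : ∀ v : Fin n, (H1 n).Reachable v ⟨0, by omega⟩ := by
    intro v
    by_cases h : v = ⟨0, by omega⟩
    · rw [h]
    · refine SimpleGraph.Adj.reachable ?_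
      have hv : (v:ℕ) ≠ 0 := fun hh => h (Fin.ext (by simpa using hh))
      rw [H1_adj]
      refine ⟨by simpa using hv, Or.inr (Or.inl (by simp))⟩
  rw [connected_iff]
  exact ⟨fun u v => (key u).trans (key v).symm, ⟨⟨0, by omega⟩⟩⟩

/-- the cycle on `Fin n` together with the chord `{0,2}` -/
def H2 (n : ℕ) : SimpleGraph (Fin n) :=
  SimpleGraph.fromRel (fun u v => (v:ℕ) = (u:ℕ) + 1 ∨ ((u:ℕ) = n - 1 ∧ (v:ℕ) = 0) ∨
    ((u:ℕ) = 0 ∧ (v:ℕ) = 2))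

lemma H2_adj {n : ℕ} (u v : Fin n) : (H2 n).Adj u v ↔ (u:ℕ) ≠ (v:ℕ) ∧
    ((((v:ℕ) = (u:ℕ) + 1 ∨ ((u:ℕ) = n - 1 ∧ (v:ℕ) = 0) ∨ ((u:ℕ) = 0 ∧ (v:ℕ) = 2))) ∨
     (((u:ℕ) = (v:ℕ) + 1 ∨ ((v:ℕ) = n - 1 ∧ (u:ℕ) = 0) ∨ ((v:ℕ) = 0 ∧ (u:ℕ) = 2)))) := by
  rw [H2, SimpleGraph.fromRel_adj, ne_eq, Fin.ext_iff]

lemma H2_deg {n : ℕ} (hn : 4 ≤ n) (v : Fin n) :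
    letI : DecidableRel (H2 n).Adj := fun _ _ => Classical.dec _
    (H2 n).degree v = if (v:ℕ) = 0 ∨ (v:ℕ) = 2 then 3 else 2 := by
  letI : DecidableRel (H2 n).Adj := fun _ _ => Classical.dec _
  have hvlt := v.isLt
  by_cases h0 : (v:ℕ) = 0
  · have hnb : (H2 n).neighborFinset v =
        {(⟨1, by omega⟩ : Fin n), ⟨2, by omega⟩, ⟨n-1, by omega⟩} := by
      ext w
      simp only [mem_neighborFinset, H2_adj, Finset.mem_insert, Finset.mem_singleton,
        Fin.ext_iff]
      omega
    rw [degree, hnb,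
      Finset.card_insert_of_notMem
        (by simp only [Finset.mem_insert, Finset.mem_singleton, Fin.ext_iff]; omega),
      Finset.card_insert_of_notMem
        (by simp only [Finset.mem_insert, Finset.mem_singleton, Fin.ext_iff]; omega),
      Finset.card_singleton]
    simp [h0]
  · by_cases h2 : (v:ℕ) = 2
    · have hnb : (H2 n).neighborFinset v =
          {(⟨0, by omega⟩ : Fin n), ⟨1, by omega⟩, ⟨3, by omega⟩} := by
        ext w
        simp only [mem_neighborFinset, H2_adj, Finset.mem_insert, Finset.mem_singleton,
          Fin.ext_iff]
        omega
      rw [degree, hnb,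
        Finset.card_insert_of_notMem
          (by simp only [Finset.mem_insert, Finset.mem_singleton, Fin.ext_iff]; omega),
        Finset.card_insert_of_notMem
          (by simp only [Finset.mem_insert, Finset.mem_singleton, Fin.ext_iff]; omega),
        Finset.card_singleton]
      simp [h2]
    · by_cases hlast : (v:ℕ) = n - 1
      · have hnb : (H2 n).neighborFinset v = {(⟨n-2, by omega⟩ : Fin n), ⟨0, by omega⟩} := by
          ext w
          simp only [mem_neighborFinset, H2_adj, Finset.mem_insert, Finset.mem_singleton,
            Fin.ext_iff]
          omega
        rw [degree, hnb,
          Finset.card_insert_of_notMem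
            (by simp only [Finset.mem_insert, Finset.mem_singleton, Fin.ext_iff]; omega),
          Finset.card_singleton]
        simp [h0, h2]
      · have hnb : (H2 n).neighborFinset v =
            {(⟨(v:ℕ)-1, by omega⟩ : Fin n), ⟨(v:ℕ)+1, by omega⟩} := by
          ext w
          simp only [mem_neighborFinset, H2_adj, Finset.mem_insert, Finset.mem_singleton,
            Fin.ext_iff]
          omega
        rw [degree, hnb,
          Finset.card_insert_of_notMem
            (by simp only [Finset.mem_insert, Finset.mem_singleton, Fin.ext_iff]; omega),
          Finset.card_singleton]
        simp [h0, h2]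

lemma H2_conn {n : ℕ} (hn : 4 ≤ n) : (H2 n).Connected := by
  have step : ∀ (k : ℕ) (h : k < n), (H2 n).Reachable ⟨0, by omega⟩ ⟨k, h⟩ := by
    intro k
    induction k with
    | zero => intro h; rfl
    | succ k ih =>
      intro h
      refine (ih (by omega)).trans (SimpleGraph.Adj.reachable ?_)
      rw [H2_adj]
      simp only [Fin.ext_iff]
      simp
  have key : ∀ v : Fin n, (H2 n).Reachable ⟨0, by omega⟩ v := by
    intro v
    have hv : v = ⟨(v:ℕ), v.isLt⟩ := by simp
    rw [hv]
    exact step _ _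
  rw [connected_iff]
  exact ⟨fun u v => (key u).symm.trans (key v), ⟨⟨0, by omega⟩⟩⟩

/-! ### Glue lemmas -/

lemma ncard_nbr {n : ℕ} (G : SimpleGraph (Fin n)) [DecidableRel G.Adj] (v : Fin n) :
    (G.neighborSet v).ncard = G.degree v := by
  rw [Set.ncard_eq_toFinset_card']; rfl

lemma edge_ncard {n : ℕ} (G : SimpleGraph (Fin n)) [DecidableRel G.Adj] :
    G.edgeSet.ncard = G.edgeFinset.card := by
  rw [Set.ncard_eq_toFinset_card']
  congr 1

lemma invdeg_eq {n : ℕ} (H : SimpleGraph (Fin n)) (d : ℕ → ℕ) (σ : Equiv.Perm (Fin n))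
    (h : ∀ i : Fin n, (H.neighborSet (σ i)).ncard = d (i : ℕ)) :
    (∑ v : Fin n, (1 : ℝ) / ((H.neighborSet v).ncard : ℝ))
      = ∑ i ∈ Finset.range n, 1/(d i : ℝ) := by
  rw [← Equiv.sum_comp σ (fun v => (1:ℝ)/(((H.neighborSet v).ncard : ℝ)))]
  rw [← Fin.sum_univ_eq_sum_range (fun i => 1/(d i : ℝ)) n]
  exact Finset.sum_congr rfl (fun i _ => by rw [h i])

lemma range_sum_nat (n : ℕ) (hn : 4 ≤ n) (D : ℕ → ℕ) :
    ∑ i ∈ Finset.range n, D i = D 0 + D 1 + D 2 + D 3 + ∑ i ∈ Finset.Ico 4 n, D i := by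
  rw [Finset.range_eq_Ico, ← Finset.sum_Ico_consecutive D (by omega : (0:ℕ) ≤ 4) hn]
  have h4 : ∑ i ∈ Finset.Ico 0 4, D i = D 0 + D 1 + D 2 + D 3 := by
    rw [← Finset.range_eq_Ico]
    rw [Finset.sum_range_succ, Finset.sum_range_succ, Finset.sum_range_succ,
      Finset.sum_range_one]
  omega

lemma range_sum_real (n : ℕ) (hn : 4 ≤ n) (f : ℕ → ℝ) :
    ∑ i ∈ Finset.range n, f i = f 0 + f 1 + f 2 + f 3 + ∑ i ∈ Finset.Ico 4 n, f i := by
  rw [Finset.range_eq_Ico, ← Finset.sum_Ico_consecutive f (by omega : (0:ℕ) ≤ 4) hn]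
  have h4 : ∑ i ∈ Finset.Ico 0 4, f i = f 0 + f 1 + f 2 + f 3 := by
    rw [← Finset.range_eq_Ico]
    rw [Finset.sum_range_succ, Finset.sum_range_succ, Finset.sum_range_succ,
      Finset.sum_range_one]
  rw [h4]

/-- `d` (0-indexed) is the degree sequence of `G`: some relabelling of the
vertices realizes the degrees `d 0, …, d (n-1)`. -/
def IsDegreeSequence {n : ℕ} (G : SimpleGraph (Fin n)) (d : ℕ → ℕ) : Prop :=
  ∃ σ : Equiv.Perm (Fin n), ∀ i : Fin n, (G.neighborSet (σ i)).ncard = d (i : ℕ)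

/-- Bounds for the inverse degree of a bicyclic graph:
`(n-2)/2 + 2/3 ≤ ρ(G) ≤ (n-3) + 1/(n-1) + 1/3`, with the upper bound attained
by a bicyclic graph with degree sequence `(n-1, 3, 2, 2, 1^{n-4})` and the lower
bound by a bicyclic graph with degree sequence `(3, 3, 2^{n-2})`. -/
theorem bicyclic_inverse_degree_bounds (n : ℕ) (hn : 4 ≤ n)
    (G : SimpleGraph (Fin n)) (hconn : G.Connected)
    (hedges : G.edgeSet.ncard = n + 1) :
    (((n : ℝ) - 2) / 2 + 2 / 3 ≤ inverseDegree G ∧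
      inverseDegree G ≤ ((n : ℝ) - 3) + 1 / ((n : ℝ) - 1) + 1 / 3) ∧
    (∃ H : SimpleGraph (Fin n), H.Connected ∧ H.edgeSet.ncard = n + 1 ∧
      IsDegreeSequence H
        (fun i => if i = 0 then n - 1 else if i = 1 then 3 else
          if i < 4 then 2 else 1) ∧
      inverseDegree H = ((n : ℝ) - 3) + 1 / ((n : ℝ) - 1) + 1 / 3) ∧
    (∃ H : SimpleGraph (Fin n), H.Connected ∧ H.edgeSet.ncard = n + 1 ∧
      IsDegreeSequence H (fun i => if i < 2 then 3 else 2) ∧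
      inverseDegree H = ((n : ℝ) - 2) / 2 + 2 / 3) := by
  letI : DecidableRel G.Adj := fun _ _ => Classical.dec _
  letI : DecidableRel (H1 n).Adj := fun _ _ => Classical.dec _
  letI : DecidableRel (H2 n).Adj := fun _ _ => Classical.dec _
  have hn1 : (1:ℕ) ≤ n := by omega
  refine ⟨?_, ?_, ?_⟩
  · -- main bounds
    have hedgesF : G.edgeFinset.card = n + 1 := by rw [← edge_ncard]; exact hedges
    have hd1 : ∀ v, 1 ≤ G.degree v := fun v => by
      have : 0 < G.degree v := by
        rw [G.degree_pos_iff_exists_adj v]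
        obtain ⟨u, hu⟩ : ∃ u : Fin n, u ≠ v :=
          Fintype.exists_ne_of_one_lt_card (by simp; omega) v
        obtain ⟨p⟩ := hconn.preconnected v u
        cases p with
        | nil => exact absurd rfl hu
        | cons h _ => exact ⟨_, h⟩
      omega
    have hdn : ∀ v, G.degree v ≤ n - 1 := fun v => by
      have := G.degree_lt_card_verts v
      rw [Fintype.card_fin] at this
      omega
    have hsum : ∑ v, G.degree v = 2*n+2 := by
      rw [G.sum_degrees_eq_twice_card_edges, hedgesF]; ring
    have hB := card_B_ge_four G hn hconn hedgesF
    have hmain := sum_inv_bounds n hn (fun v => G.degree v) hd1 hdn hsum hB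
    have hrw : inverseDegree G = ∑ v, (1:ℝ)/(G.degree v) := by
      unfold inverseDegree
      exact Finset.sum_congr rfl (fun v _ => by rw [ncard_nbr])
    rw [hrw]
    exact hmain
  · -- upper extremal graph
    refine ⟨H1 n, H1_conn hn, ?_, ?_, ?_⟩
    · -- edge count
      have hdsum : ∑ v, (H1 n).degree v = 2*(n+1) := by
        have h1 : ∑ v : Fin n, (H1 n).degree v
            = ∑ i ∈ Finset.range n, (if i = 0 then n - 1 else if i = 1 then 3 else
              if i < 4 then 2 else 1) := by
          rw [← Fin.sum_univ_eq_sum_range (fun i => if i = 0 then n - 1 else if i = 1 then 3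
            else if i < 4 then 2 else 1) n]
          exact Finset.sum_congr rfl (fun v _ => H1_deg hn v)
        rw [h1, range_sum_nat n hn]
        have h2 : ∑ i ∈ Finset.Ico 4 n, (if i = 0 then n - 1 else if i = 1 then 3 else
            if i < 4 then 2 else 1) = n - 4 := by
          rw [Finset.sum_congr rfl (fun i hi => ?_), Finset.sum_const, Nat.card_Ico,
            smul_eq_mul, mul_one]
          have h4i : 4 ≤ i := (Finset.mem_Ico.1 hi).1
          have e1 : ¬ i = 0 := by omega
          have e2 : ¬ i = 1 := by omega
          have e3 : ¬ i < 4 := by omega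
          simp [e1, e2, e3]
        rw [h2]
        norm_num
        omega
      rw [edge_ncard]
      have := (H1 n).sum_degrees_eq_twice_card_edges
      omega
    · -- degree sequence
      exact ⟨Equiv.refl _, fun i => by
        rw [Equiv.refl_apply, ncard_nbr, H1_deg hn i]⟩
    · -- inverse degree value
      rw [inverseDegree, invdeg_eq (H1 n)
        (fun i => if i = 0 then n - 1 else if i = 1 then 3 else if i < 4 then 2 else 1)
        (Equiv.refl _) (fun i => by rw [Equiv.refl_apply, ncard_nbr, H1_deg hn i]),
        range_sum_real n hn]
      have h2 : ∑ i ∈ Finset.Ico 4 n, (1:ℝ)/((if i = 0 then n - 1 else if i = 1 then 3 else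
          if i < 4 then 2 else 1 : ℕ) : ℝ) = ((n:ℝ) - 4) := by
        rw [Finset.sum_congr rfl (fun i hi => ?_), Finset.sum_const, Nat.card_Ico,
          nsmul_eq_mul, mul_one, Nat.cast_sub hn]
        · norm_num
        · have h4i : 4 ≤ i := (Finset.mem_Ico.1 hi).1
          have e1 : ¬ i = 0 := by omega
          have e2 : ¬ i = 1 := by omega
          have e3 : ¬ i < 4 := by omega
          simp [e1, e2, e3]
      rw [h2]
      have hc : ((n - 1 : ℕ) : ℝ) = (n:ℝ) - 1 := by
        rw [Nat.cast_sub hn1]; norm_num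
      norm_num [hc]
      ring
  · -- lower extremal graph
    have hswap : ∀ i : Fin n, ((H2 n).neighborSet
        ((Equiv.swap (⟨1, by omega⟩ : Fin n) ⟨2, by omega⟩) i)).ncard
        = (fun i => if i < 2 then 3 else 2) (i : ℕ) := by
      intro i
      rw [ncard_nbr]
      by_cases hi1 : i = (⟨1, by omega⟩ : Fin n)
      · rw [hi1, Equiv.swap_apply_left, H2_deg hn]
        simp
      · by_cases hi2 : i = (⟨2, by omega⟩ : Fin n)
        · rw [hi2, Equiv.swap_apply_right, H2_deg hn]
          simp
        · rw [Equiv.swap_apply_of_ne_of_ne hi1 hi2, H2_deg hn]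
          have hv1 : (i:ℕ) ≠ 1 := fun hh => hi1 (Fin.ext (by simpa using hh))
          have hv2 : (i:ℕ) ≠ 2 := fun hh => hi2 (Fin.ext (by simpa using hh))
          by_cases h0 : (i:ℕ) = 0
          · simp [h0]
          · have hb : ¬ ((i:ℕ) = 0 ∨ (i:ℕ) = 2) := by omega
            have hlt : ¬ (i:ℕ) < 2 := by omega
            simp [hb, hlt]
    refine ⟨H2 n, H2_conn hn, ?_, ⟨_, hswap⟩, ?_⟩
    · -- edge count
      have hdsum : ∑ v, (H2 n).degree v = 2*(n+1) := by
        have h1 : ∑ v : Fin n, (H2 n).degree v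
            = ∑ i ∈ Finset.range n, (if i = 0 ∨ i = 2 then 3 else 2) := by
          rw [← Fin.sum_univ_eq_sum_range (fun i => if i = 0 ∨ i = 2 then 3 else 2) n]
          exact Finset.sum_congr rfl (fun v _ => H2_deg hn v)
        rw [h1, range_sum_nat n hn]
        have hcong : ∀ i ∈ Finset.Ico 4 n, (if i = 0 ∨ i = 2 then 3 else 2) = 2 := by
          intro i hi
          have h4i : 4 ≤ i := (Finset.mem_Ico.1 hi).1
          have e1 : ¬ (i = 0 ∨ i = 2) := by omega
          simp [e1]
        have h2 : ∑ i ∈ Finset.Ico 4 n, (if i = 0 ∨ i = 2 then 3 else 2) = 2*(n - 4) := by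
          rw [Finset.sum_congr rfl hcong, Finset.sum_const, Nat.card_Ico, smul_eq_mul]
          ring
        rw [h2]
        norm_num
        omega
      rw [edge_ncard]
      have := (H2 n).sum_degrees_eq_twice_card_edges
      omega
    · -- inverse degree value
      rw [inverseDegree, invdeg_eq (H2 n) (fun i => if i < 2 then 3 else 2) _ hswap,
        range_sum_real n hn]
      have hcong : ∀ i ∈ Finset.Ico 4 n, (1:ℝ)/((if i < 2 then 3 else 2 : ℕ) : ℝ)
          = 1/2 := by
        intro i hi
        have h4i : 4 ≤ i := (Finset.mem_Ico.1 hi).1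
        have e1 : ¬ i < 2 := by omega
        simp [e1]
      have h2 : ∑ i ∈ Finset.Ico 4 n, (1:ℝ)/((if i < 2 then 3 else 2 : ℕ) : ℝ)
          = ((n:ℝ) - 4)/2 := by
        rw [Finset.sum_congr rfl hcong, Finset.sum_const, Nat.card_Ico,
          nsmul_eq_mul, Nat.cast_sub hn]
        push_cast; ring
      rw [h2]
      norm_num
      ring
end
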